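/- The multiset of eigenvalues of the adjacency matrix of the friendship graph F_k is {(1+√(1+8k))/2, (1−√(1+8k))/2} together with 1 with multiplicity k−1 and −1 with multiplicity k. -/

import Mathlib

open Matrix

/-- The friendship graph `F_k`: `k` triangles all sharing the vertex `0`.
Vertices `2i+1` and `2i+2` are paired into a triangle with the center `0`. -/
def friendshipGraph (k : ℕ) : SimpleGraph (Fin (2 * k + 1)) :=
  SimpleGraph.fromRel (fun i j => i.val = 0 ∨ (i.val - 1) / 2 = (j.val - 1) / 2)

/-- The adjacency matrix of the friendship graph `F_k` over `ℝ`. -/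
noncomputable def friendshipAdj (k : ℕ) : Matrix (Fin (2 * k + 1)) (Fin (2 * k + 1)) ℝ :=
  letI := Classical.decRel (friendshipGraph k).Adj
  (friendshipGraph k).adjMatrix ℝ

open Matrix in
lemma count_eigen_ge {n : ℕ} {A : Matrix (Fin n) (Fin n) ℝ} (hA : A.IsHermitian)
    (μ : ℝ) {m : ℕ} (v : Fin m → EuclideanSpace ℝ (Fin n))
    (hli : LinearIndependent ℝ v)
    (hev : ∀ i, A *ᵥ (v i) = μ • (v i)) :
    m ≤ Multiset.count μ (Finset.univ.val.map hA.eigenvalues) := by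
  classical
  set b := hA.eigenvectorBasis.toBasis with hb
  have hbv : ∀ j, A *ᵥ (b j) = hA.eigenvalues j • b j := fun j => by
    simpa [hb] using hA.mulVec_eigenvectorBasis j
  set s : Finset (Fin n) := Finset.univ.filter (fun i => hA.eigenvalues i = μ) with hs
  have hrepr : ∀ x : EuclideanSpace ℝ (Fin n), A *ᵥ x = μ • x →
      ∀ j, hA.eigenvalues j * (b.repr x j) = μ * (b.repr x j) := by
    intro x hx j
    have h1 : ∑ i, b.repr x i • b i = x := b.sum_repr x
    have h2 : (∑ i, (hA.eigenvalues i * b.repr x i) • b i) = μ • x := by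
      apply WithLp.ofLp_injective 2
      have h1' : ∑ i, b.repr x i • (b i).ofLp = x.ofLp := by
        have := congrArg WithLp.ofLp h1
        simp only [WithLp.ofLp_sum, WithLp.ofLp_smul] at this
        exact this
      simp only [WithLp.ofLp_sum, WithLp.ofLp_smul]
      calc ∑ i, (hA.eigenvalues i * b.repr x i) • (b i).ofLp
          = ∑ i, b.repr x i • (A *ᵥ b i) := by
            refine Finset.sum_congr rfl fun i _ => ?_
            rw [hbv i, smul_smul, mul_comm]
        _ = A.mulVecLin (∑ i, b.repr x i • (b i).ofLp) := by
            rw [map_sum]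
            refine Finset.sum_congr rfl fun i _ => ?_
            rw [_root_.map_smul, Matrix.mulVecLin_apply]
        _ = μ • x.ofLp := by rw [h1', Matrix.mulVecLin_apply, hx]
    have e1 : (b.repr (∑ i, (hA.eigenvalues i * b.repr x i) • b i) : Fin n → ℝ)
        = fun i => hA.eigenvalues i * b.repr x i := by
      exact_mod_cast b.repr_sum_self _
    calc hA.eigenvalues j * b.repr x j
        = b.repr (∑ i, (hA.eigenvalues i * b.repr x i) • b i) j := (congrFun e1 j).symm
      _ = b.repr (μ • x) j := by rw [h2]
      _ = μ * b.repr x j := by rw [_root_.map_smul]; simp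
  have hmem : ∀ i, v i ∈ Submodule.span ℝ (b '' (s : Set (Fin n))) := by
    intro i
    rw [Module.Basis.mem_span_image]
    intro j hj
    simp only [Finset.mem_coe, Finset.mem_filter, hs] at hj ⊢
    simp only [Finsupp.mem_support_iff] at hj
    refine ⟨Finset.mem_univ j, ?_⟩
    have := hrepr (v i) (hev i) j
    rcases mul_eq_mul_right_iff.1 this with h | h
    · exact h
    · exact absurd h hj
  have h4 : Submodule.span ℝ (Set.range v) ≤ Submodule.span ℝ (b '' s) :=
    Submodule.span_le.2 (Set.range_subset_iff.2 hmem)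
  have h5 : Module.finrank ℝ (Submodule.span ℝ (Set.range v)) = m := by
    rw [finrank_span_eq_card hli, Fintype.card_fin]
  have h6 : Module.finrank ℝ (Submodule.span ℝ (b '' (s : Set (Fin n)))) ≤ s.card := by
    have : (b '' (s : Set (Fin n))) = ↑(s.image b) := by simp [Finset.coe_image]
    rw [this]
    exact (finrank_span_finset_le_card _).trans (Finset.card_image_le)
  have hcard : Multiset.count μ (Finset.univ.val.map hA.eigenvalues) = s.card := by
    rw [Multiset.count_map]
    have e2 : Multiset.filter (fun a => μ = hA.eigenvalues a) Finset.univ.val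
        = Multiset.filter (fun i => hA.eigenvalues i = μ) Finset.univ.val :=
      Multiset.filter_congr (fun x _ => eq_comm)
    rw [e2, hs]
    rfl
  rw [hcard]
  calc m = Module.finrank ℝ (Submodule.span ℝ (Set.range v)) := h5.symm
    _ ≤ Module.finrank ℝ (Submodule.span ℝ (b '' (s : Set (Fin n)))) :=
        Submodule.finrank_mono h4
    _ ≤ s.card := h6

lemma count_eigen_ge' {n : ℕ} {A : Matrix (Fin n) (Fin n) ℝ} (hA : A.IsHermitian)
    (μ : ℝ) {m : ℕ} (v : Fin m → (Fin n → ℝ))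
    (hli : LinearIndependent ℝ v)
    (hev : ∀ i, A *ᵥ (v i) = μ • (v i)) :
    m ≤ Multiset.count μ (Finset.univ.val.map hA.eigenvalues) :=
  count_eigen_ge hA μ (fun i => WithLp.toLp 2 (v i))
    (hli.map' (WithLp.linearEquiv 2 ℝ (Fin n → ℝ)).symm.toLinearMap (LinearEquiv.ker _)) hev

lemma friendshipAdj_apply (k : ℕ) (i j : Fin (2*k+1)) :
    friendshipAdj k i j =
      if i.val ≠ j.val ∧ (i.val = 0 ∨ j.val = 0 ∨ (i.val-1)/2 = (j.val-1)/2) then 1 else 0 := by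
  letI := Classical.decRel (friendshipGraph k).Adj
  have hadj : (friendshipGraph k).Adj i j ↔
      (i.val ≠ j.val ∧ (i.val = 0 ∨ j.val = 0 ∨ (i.val-1)/2 = (j.val-1)/2)) := by
    rw [show (friendshipGraph k) = SimpleGraph.fromRel
      (fun i j => i.val = 0 ∨ (i.val - 1) / 2 = (j.val - 1) / 2) from rfl,
      SimpleGraph.fromRel_adj]
    rw [ne_eq, Fin.ext_iff]
    tauto
  unfold friendshipAdj
  rw [SimpleGraph.adjMatrix_apply]
  exact if_congr hadj rfl rfl

lemma mulVec_apply' {n : ℕ} (A : Matrix (Fin n) (Fin n) ℝ) (x : Fin n → ℝ) (j : Fin n) :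
    (A *ᵥ x) j = ∑ l, A j l * x l := rfl
/-- the "center" eigenvector -/
def zvec (k : ℕ) (c : ℝ) : Fin (2*k+1) → ℝ := fun j => if j.val = 0 then c else 1

lemma mulVec_zvec (k : ℕ) (hk : 1 ≤ k) (c : ℝ) (hc : c * (c + 1) = 2 * k) :
    friendshipAdj k *ᵥ zvec k c = (c + 1) • zvec k c := by
  funext j
  rw [mulVec_apply']
  rcases j with ⟨jv, hjv⟩
  by_cases hj0 : jv = 0
  · subst hj0
    have hterm : ∀ l ∈ Finset.univ, friendshipAdj k ⟨0, hjv⟩ l * zvec k c l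
        = 1 - (if l = (⟨0, hjv⟩ : Fin (2*k+1)) then 1 else 0) := by
      intro l _
      simp only [friendshipAdj_apply, zvec, Fin.ext_iff, true_or, or_true, and_true,
        true_and, eq_self_iff_true]
      split_ifs <;> first | (exfalso; omega) | norm_num | ring
    rw [Finset.sum_congr rfl hterm, Finset.sum_sub_distrib, Finset.sum_ite_eq']
    simp [zvec, Finset.card_univ, mul_comm]
    linarith [hc]
  · -- partner vertex
    set pv : ℕ := if jv % 2 = 1 then jv + 1 else jv - 1 with hpv
    have hpvlt : pv < 2*k+1 := by simp only [hpv]; split <;> omega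
    have hpv' : (jv % 2 = 1 ∧ pv = jv + 1) ∨ (jv % 2 ≠ 1 ∧ pv = jv - 1) := by
      rw [hpv]; split <;> [left; right] <;> simp_all
    have hterm : ∀ l ∈ Finset.univ, friendshipAdj k ⟨jv, hjv⟩ l * zvec k c l
        = (if l = (⟨0, by omega⟩ : Fin (2*k+1)) then c else 0)
          + (if l = (⟨pv, hpvlt⟩ : Fin (2*k+1)) then 1 else 0) := by
      intro l _
      simp only [friendshipAdj_apply, zvec, Fin.ext_iff]
      split_ifs <;> first | (exfalso; omega) | norm_num | ring
    rw [Finset.sum_congr rfl hterm, Finset.sum_add_distrib, Finset.sum_ite_eq',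
      Finset.sum_ite_eq']
    simp [zvec, hj0]

/-- eigenvector for -1 -/
def uvec (k : ℕ) (i : Fin k) : Fin (2*k+1) → ℝ :=
  Pi.single ⟨2*i.val+1, by omega⟩ 1 - Pi.single ⟨2*i.val+2, by omega⟩ 1

lemma mulVec_uvec (k : ℕ) (i : Fin k) :
    friendshipAdj k *ᵥ uvec k i = (-1 : ℝ) • uvec k i := by
  unfold uvec
  rw [mulVec_sub, mulVec_single, mulVec_single]
  funext j
  rcases j with ⟨jv, hjv⟩
  have hi := i.isLt
  simp only [Pi.sub_apply, Pi.smul_apply, Pi.single_apply, friendshipAdj_apply, Fin.ext_iff,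
    smul_eq_mul, op_smul_eq_mul, Matrix.col_apply, mul_one]
  split_ifs <;> first | (exfalso; (try simp only [false_or, or_false] at *); omega) | norm_num

/-- eigenvector for 1 -/
def wvec (k : ℕ) (hk : 1 ≤ k) (i : Fin (k-1)) : Fin (2*k+1) → ℝ :=
  (Pi.single ⟨1, by omega⟩ 1 + Pi.single ⟨2, by omega⟩ 1)
    - (Pi.single ⟨2*i.val+3, by omega⟩ 1 + Pi.single ⟨2*i.val+4, by omega⟩ 1)

set_option maxHeartbeats 2000000 in
lemma mulVec_wvec (k : ℕ) (hk : 1 ≤ k) (i : Fin (k-1)) :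
    friendshipAdj k *ᵥ wvec k hk i = (1 : ℝ) • wvec k hk i := by
  unfold wvec
  rw [mulVec_sub, mulVec_add, mulVec_add, mulVec_single, mulVec_single, mulVec_single,
    mulVec_single]
  funext j
  rcases j with ⟨jv, hjv⟩
  have hi := i.isLt
  simp only [Pi.sub_apply, Pi.add_apply, Pi.smul_apply, Pi.single_apply, friendshipAdj_apply,
    Fin.ext_iff, smul_eq_mul, op_smul_eq_mul, Matrix.col_apply, mul_one]
  split_ifs <;> first | (exfalso; (try simp only [false_or, or_false] at *); omega) | norm_num

lemma uvec_li (k : ℕ) : LinearIndependent ℝ (uvec k) := by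
  rw [Fintype.linearIndependent_iff]
  intro g hg i
  have hi := i.isLt
  have e : ∀ j ∈ Finset.univ, (g j • uvec k j) (⟨2*i.val+1, by omega⟩ : Fin (2*k+1))
      = if j = i then g j else 0 := by
    intro j _
    have hj := j.isLt
    simp only [uvec, Pi.smul_apply, Pi.sub_apply, Pi.single_apply, Fin.ext_iff, smul_eq_mul]
    split_ifs <;> first | (exfalso; omega) | ring
  have h2 := congrFun hg (⟨2*i.val+1, by omega⟩ : Fin (2*k+1))
  rw [Finset.sum_apply, Finset.sum_congr rfl e, Finset.sum_ite_eq' Finset.univ i g] at h2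
  simpa using h2

lemma wvec_li (k : ℕ) (hk : 1 ≤ k) : LinearIndependent ℝ (wvec k hk) := by
  rw [Fintype.linearIndependent_iff]
  intro g hg i
  have hi := i.isLt
  have e : ∀ j ∈ Finset.univ, (g j • wvec k hk j) (⟨2*i.val+3, by omega⟩ : Fin (2*k+1))
      = if j = i then -g j else 0 := by
    intro j _
    have hj := j.isLt
    simp only [wvec, Pi.smul_apply, Pi.sub_apply, Pi.add_apply, Pi.single_apply, Fin.ext_iff,
      smul_eq_mul]
    split_ifs <;> first | (exfalso; omega) | ring
  have h2 := congrFun hg (⟨2*i.val+3, by omega⟩ : Fin (2*k+1))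
  rw [Finset.sum_apply, Finset.sum_congr rfl e,
    Finset.sum_ite_eq' Finset.univ i (fun j => -g j)] at h2
  simpa using h2

lemma zvec_li (k : ℕ) (hk : 1 ≤ k) (c : ℝ) :
    LinearIndependent ℝ (fun _ : Fin 1 => zvec k c) := by
  rw [Fintype.linearIndependent_iff]
  intro g hg i
  have h2 := congrFun hg (⟨1, by omega⟩ : Fin (2*k+1))
  rw [Finset.sum_apply] at h2
  simp only [Fin.sum_univ_one, Pi.smul_apply, zvec, smul_eq_mul] at h2
  norm_num at h2
  rw [Fin.eq_zero i]
  exact h2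

lemma pair_li : LinearIndependent ℝ ![uvec 1 0, zvec 1 (-2)] := by
  rw [Fintype.linearIndependent_iff]
  intro g hg
  have h0 := congrFun hg (⟨0, by omega⟩ : Fin (2*1+1))
  have h1 := congrFun hg (⟨1, by omega⟩ : Fin (2*1+1))
  rw [Finset.sum_apply] at h0 h1
  simp only [Fin.sum_univ_two, Matrix.cons_val_zero, Matrix.cons_val_one, Matrix.head_cons,
    Pi.add_apply, Pi.smul_apply, uvec, zvec, Pi.sub_apply, Pi.single_apply, Fin.ext_iff,
    smul_eq_mul] at h0 h1
  norm_num at h0 h1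
  intro i
  fin_cases i <;> simp <;> linarith

theorem stmt_7 (k : ℕ) (hk : 1 ≤ k) (h : (friendshipAdj k).IsHermitian) :
    (Finset.univ.val.map h.eigenvalues) =
      ({(1 + Real.sqrt (1 + 8 * k)) / 2, (1 - Real.sqrt (1 + 8 * k)) / 2} : Multiset ℝ) +
        Multiset.replicate (k - 1) 1 + Multiset.replicate k (-1) := by
  classical
  set M : Multiset ℝ := Finset.univ.val.map h.eigenvalues with hM
  set s : ℝ := Real.sqrt (1 + 8 * k) with hsdef
  have hs0 : 0 ≤ s := Real.sqrt_nonneg _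
  have hss : s ^ 2 = 1 + 8 * k := Real.sq_sqrt (by positivity)
  have hk1R : (1:ℝ) ≤ (k:ℝ) := by exact_mod_cast hk
  have hs3 : 3 ≤ s := by nlinarith [hs0, hss, hk1R]
  set a : ℝ := (1 + s) / 2 with hadef
  set bb : ℝ := (1 - s) / 2 with hbdef
  have hMcard : Multiset.card M = 2 * k + 1 := by simp [hM]
  have hca : 1 ≤ Multiset.count a M := by
    have hc : (a - 1) * ((a - 1) + 1) = 2 * k := by rw [hadef]; nlinarith [hss]
    have hev := mulVec_zvec k hk (a - 1) hc
    rw [show a - 1 + 1 = a by ring] at hev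
    have := count_eigen_ge' h a (fun _ : Fin 1 => zvec k (a-1)) (zvec_li k hk _) (fun _ => hev)
    rwa [← hM] at this
  have hc1 : k - 1 ≤ Multiset.count 1 M := by
    have := count_eigen_ge' h 1 (wvec k hk) (wvec_li k hk) (mulVec_wvec k hk)
    rwa [← hM] at this
  set T : Multiset ℝ := ({a, bb} : Multiset ℝ) +
      Multiset.replicate (k - 1) 1 + Multiset.replicate k (-1) with hT
  have hTcount : ∀ x : ℝ, Multiset.count x T
      = (if x = bb then 1 else 0) + (if x = a then 1 else 0)
        + (if (1:ℝ) = x then k - 1 else 0) + (if (-1:ℝ) = x then k else 0) := by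
    intro x
    rw [hT]
    simp only [Multiset.insert_eq_cons, Multiset.count_add, Multiset.count_cons,
      Multiset.count_singleton, Multiset.count_replicate]
    try rfl
    try omega
  have hTcard : Multiset.card T = 2 * k + 1 := by
    rw [hT]
    simp only [Multiset.card_add, Multiset.card_replicate, Multiset.insert_eq_cons,
      Multiset.card_cons, Multiset.card_singleton]
    omega
  refine (Multiset.eq_of_le_of_card_le ?_ (le_of_eq (hMcard.trans hTcard.symm))).symm
  rw [Multiset.le_iff_count]
  intro x
  rw [hTcount x]
  rcases Nat.lt_or_ge k 2 with hk2 | hk2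
  · -- k = 1
    have hk1 : k = 1 := by omega
    subst hk1
    have hs9 : s = 3 := by
      rw [hsdef, show ((1:ℝ) + 8 * ((1:ℕ):ℝ)) = 3 ^ 2 by norm_num]
      exact Real.sqrt_sq (by norm_num)
    have ha2 : a = 2 := by rw [hadef, hs9]; norm_num
    have hbm : bb = -1 := by rw [hbdef, hs9]; norm_num
    have hcm1 : 2 ≤ Multiset.count (-1) M := by
      have h2 : ∀ i, friendshipAdj 1 *ᵥ (![uvec 1 0, zvec 1 (-2)] i)
          = (-1 : ℝ) • (![uvec 1 0, zvec 1 (-2)] i) := by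
        intro i
        fin_cases i
        · simpa using mulVec_uvec 1 0
        · have := mulVec_zvec 1 le_rfl (-2) (by norm_num)
          norm_num at this ⊢
          exact this
      have := count_eigen_ge' h (-1) ![uvec 1 0, zvec 1 (-2)] pair_li h2
      rwa [← hM] at this
    by_cases hxb : x = bb
    · subst hxb
      rw [if_pos rfl, if_neg (show ¬(bb = a) by rw [hbm, ha2]; norm_num),
        if_neg (show ¬((1:ℝ) = bb) by rw [hbm]; norm_num),
        if_pos (show (-1:ℝ) = bb by rw [hbm])]
      rw [hbm]
      simpa using hcm1
    · by_cases hxa : x = a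
      · subst hxa
        rw [if_neg hxb, if_pos rfl,
          if_neg (show ¬((1:ℝ) = a) by rw [ha2]; norm_num),
          if_neg (show ¬((-1:ℝ) = a) by rw [ha2]; norm_num)]
        simpa using hca
      · rw [if_neg hxb, if_neg hxa,
          if_neg (show ¬((-1:ℝ) = x) by intro hh; exact hxb (by rw [hbm, ← hh]))]
        split_ifs <;> simp
  · -- k ≥ 2
    have hk2R : (2:ℝ) ≤ (k:ℝ) := by exact_mod_cast hk2
    have hs4 : 4 < s := by nlinarith [hss, hs0, hk2R]
    have ha2 : 2 < a := by rw [hadef]; linarith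
    have hbm : bb < -1 := by rw [hbdef]; linarith
    have hcb : 1 ≤ Multiset.count bb M := by
      have hc : (bb - 1) * ((bb - 1) + 1) = 2 * k := by rw [hbdef]; nlinarith [hss]
      have hev := mulVec_zvec k hk (bb - 1) hc
      rw [show bb - 1 + 1 = bb by ring] at hev
      have := count_eigen_ge' h bb (fun _ : Fin 1 => zvec k (bb-1)) (zvec_li k hk _) (fun _ => hev)
      rwa [← hM] at this
    have hcm1 : k ≤ Multiset.count (-1) M := by
      have := count_eigen_ge' h (-1) (uvec k) (uvec_li k) (mulVec_uvec k)
      rwa [← hM] at this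
    by_cases hxb : x = bb
    · subst hxb
      rw [if_pos rfl, if_neg (show ¬(bb = a) by intro hh; rw [hh] at hbm; linarith),
        if_neg (show ¬((1:ℝ) = bb) by intro hh; rw [← hh] at hbm; linarith),
        if_neg (show ¬((-1:ℝ) = bb) by intro hh; rw [← hh] at hbm; linarith)]
      simpa using hcb
    · by_cases hxa : x = a
      · subst hxa
        rw [if_neg hxb, if_pos rfl,
          if_neg (show ¬((1:ℝ) = a) by intro hh; rw [← hh] at ha2; linarith),
          if_neg (show ¬((-1:ℝ) = a) by intro hh; rw [← hh] at ha2; linarith)]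
        simpa using hca
      · by_cases hx1 : (1:ℝ) = x
        · rw [if_neg hxb, if_neg hxa, if_pos hx1,
            if_neg (show ¬((-1:ℝ) = x) by intro hh; rw [← hh] at hx1; norm_num at hx1)]
          rw [← hx1]
          simpa using hc1
        · by_cases hxm : (-1:ℝ) = x
          · rw [if_neg hxb, if_neg hxa, if_neg hx1, if_pos hxm]
            rw [← hxm]
            simpa using hcm1
          · rw [if_neg hxb, if_neg hxa, if_neg hx1, if_neg hxm]
            simp
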